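/- Let a be a natural number with a ≥ 2 and let b > 0. Let Y be a random variable with the Erlang (Gamma) distribution of shape a and rate b, so that Y has mean a/b. Then for every natural number k ≥ 1, the k-th central moment satisfies E[(Y − a/b)^k] ≤ (k!·sqrt(a)/b^k) · ((sqrt(a))^{k+1} − 1)/(sqrt(a) − 1). -/

import Mathlib

open MeasureTheory ProbabilityTheory Real Set Filter Topology Finset
open scoped ENNReal NNReal

namespace ErlangAux

variable {b : ℝ}

lemma int_pow (hb : 0 < b) (n : ℕ) :
    IntegrableOn (fun x : ℝ => x ^ n * Real.exp (-(b * x))) (Set.Ioi 0) := by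
  have h := integrableOn_rpow_mul_exp_neg_mul_rpow (p := 1) (s := (n : ℝ))
    (by exact_mod_cast lt_of_lt_of_le (by norm_num : (-1:ℝ) < 0) (Nat.cast_nonneg n)) zero_lt_one hb
  refine h.congr_fun (fun x hx => ?_) measurableSet_Ioi
  rw [Set.mem_Ioi] at hx
  dsimp only
  rw [Real.rpow_natCast, Real.rpow_one, neg_mul]

lemma expand_poly (c : ℝ) (j m : ℕ) (x : ℝ) :
    (x - c) ^ j * x ^ m * Real.exp (-(b * x)) =
      ∑ i ∈ Finset.range (j + 1),
        ((-c) ^ (j - i) * (j.choose i : ℝ)) * (x ^ (i + m) * Real.exp (-(b * x))) := by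
  rw [sub_eq_add_neg, add_pow, Finset.sum_mul, Finset.sum_mul]
  refine Finset.sum_congr rfl fun i _ => ?_
  ring

lemma int_poly (hb : 0 < b) (c : ℝ) (j m : ℕ) :
    IntegrableOn (fun x : ℝ => (x - c) ^ j * x ^ m * Real.exp (-(b * x))) (Set.Ioi 0) := by
  rw [show (fun x : ℝ => (x - c) ^ j * x ^ m * Real.exp (-(b * x)))
      = fun x : ℝ => ∑ i ∈ Finset.range (j + 1),
        ((-c) ^ (j - i) * (j.choose i : ℝ)) * (x ^ (i + m) * Real.exp (-(b * x)))
    from funext (expand_poly c j m)]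
  exact integrable_finset_sum _ fun i _ => ((int_pow hb (i + m)).const_mul _)

lemma tendsto_pow_exp (hb : 0 < b) (n : ℕ) :
    Tendsto (fun x : ℝ => x ^ n * Real.exp (-(b * x))) atTop (𝓝 0) := by
  refine (tendsto_rpow_mul_exp_neg_mul_atTop_nhds_zero (n : ℝ) b hb).congr' ?_
  filter_upwards [eventually_ge_atTop (0:ℝ)] with x hx
  rw [Real.rpow_natCast, neg_mul]

lemma tendsto_poly (hb : 0 < b) (c : ℝ) (j m : ℕ) :
    Tendsto (fun x : ℝ => (x - c) ^ j * x ^ m * Real.exp (-(b * x))) atTop (𝓝 0) := by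
  rw [show (fun x : ℝ => (x - c) ^ j * x ^ m * Real.exp (-(b * x)))
      = fun x : ℝ => ∑ i ∈ Finset.range (j + 1),
        ((-c) ^ (j - i) * (j.choose i : ℝ)) * (x ^ (i + m) * Real.exp (-(b * x)))
    from funext (expand_poly c j m)]
  have : Tendsto (fun x : ℝ => ∑ i ∈ Finset.range (j + 1),
      ((-c) ^ (j - i) * (j.choose i : ℝ)) * (x ^ (i + m) * Real.exp (-(b * x)))) atTop
      (𝓝 (∑ i ∈ Finset.range (j + 1), ((-c) ^ (j - i) * (j.choose i : ℝ)) * 0)) :=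
    tendsto_finset_sum _ fun i _ => ((tendsto_pow_exp hb (i + m)).const_mul _)
  simpa using this

end ErlangAux

namespace ErlangAux

lemma hasDerivAt_exp_neg (hb : 0 < b) (x : ℝ) :
    HasDerivAt (fun y : ℝ => Real.exp (-(b * y))) (-b * Real.exp (-(b * x))) x := by
  have h := (((hasDerivAt_id x).const_mul b).neg).exp
  simpa [mul_comm] using h

/-- `I 1 = 0` : the gamma-type integral of `(x - μ)` vanishes. -/
lemma I_one (hb : 0 < b) (m : ℕ) :
    ∫ x in Set.Ioi (0:ℝ), (x - ((m:ℝ)+2)/b) ^ 1 * x ^ (m+1) * Real.exp (-(b * x)) = 0 := by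
  set μ : ℝ := ((m:ℝ)+2)/b with hμ
  have hbμ : b * μ = (m:ℝ) + 2 := by
    rw [hμ]; field_simp
  set H : ℝ → ℝ := fun x => x ^ (m+2) * Real.exp (-(b * x)) with hH
  have hderiv : ∀ x : ℝ,
      HasDerivAt H (-b * ((x - μ) ^ 1 * x ^ (m+1) * Real.exp (-(b * x)))) x := by
    intro x
    have h := (hasDerivAt_pow (m+2) x).mul (hasDerivAt_exp_neg hb x)
    refine h.congr_deriv ?_
    have h2 : ((m:ℝ)+2) = b * μ := hbμ.symm
    have e1 : m + 2 - 1 = m + 1 := rfl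
    rw [e1]
    push_cast
    rw [h2]
    ring
  have hint : IntegrableOn
      (fun x : ℝ => -b * ((x - μ) ^ 1 * x ^ (m+1) * Real.exp (-(b * x)))) (Set.Ioi 0) :=
    (int_poly hb μ 1 (m+1)).const_mul _
  have hibp := integral_Ioi_of_hasDerivAt_of_tendsto
    (f := H) (a := 0) (m := 0)
    (Continuous.continuousWithinAt (by fun_prop))
    (fun x _ => hderiv x) hint ?_
  · have hH0 : H 0 = 0 := by simp [hH]
    rw [hH0, sub_zero] at hibp
    rw [MeasureTheory.integral_const_mul] at hibp
    rcases mul_eq_zero.1 hibp with h | h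
    · exact absurd (neg_eq_zero.1 h) hb.ne'
    · exact h
  · exact tendsto_pow_exp hb (m+2)

/-- The recursion `b * I (n+2) = (n+1) * I (n+1) + (n+1) * μ * I n`. -/
lemma I_rec (hb : 0 < b) (m n : ℕ) :
    b * ∫ x in Set.Ioi (0:ℝ), (x - ((m:ℝ)+2)/b) ^ (n+2) * x ^ (m+1) * Real.exp (-(b * x))
      = ((n:ℝ)+1) * (∫ x in Set.Ioi (0:ℝ),
          (x - ((m:ℝ)+2)/b) ^ (n+1) * x ^ (m+1) * Real.exp (-(b * x)))
        + ((n:ℝ)+1) * (((m:ℝ)+2)/b) * ∫ x in Set.Ioi (0:ℝ),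
          (x - ((m:ℝ)+2)/b) ^ n * x ^ (m+1) * Real.exp (-(b * x)) := by
  set μ : ℝ := ((m:ℝ)+2)/b with hμ
  have hbμ : b * μ = (m:ℝ) + 2 := by rw [hμ]; field_simp
  set H : ℝ → ℝ := fun x => (x - μ) ^ (n+1) * x ^ (m+2) * Real.exp (-(b * x)) with hH
  set D : ℝ → ℝ := fun x =>
      ((n:ℝ)+1) * ((x - μ) ^ (n+1) * x ^ (m+1) * Real.exp (-(b * x)))
      + ((n:ℝ)+1) * μ * ((x - μ) ^ n * x ^ (m+1) * Real.exp (-(b * x)))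
      - b * ((x - μ) ^ (n+2) * x ^ (m+1) * Real.exp (-(b * x))) with hD
  have hderiv : ∀ x : ℝ, HasDerivAt H (D x) x := by
    intro x
    have h := ((((hasDerivAt_id x).sub_const μ).pow (n+1)).mul
      (hasDerivAt_pow (m+2) x)).mul (hasDerivAt_exp_neg hb x)
    refine h.congr_deriv ?_
    have h2 : ((m:ℝ)+2) = b * μ := hbμ.symm
    have e1 : m + 2 - 1 = m + 1 := rfl
    have e2 : n + 1 - 1 = n := rfl
    simp only [hD, id_eq, mul_one, Pi.mul_apply, Pi.pow_apply]
    rw [e1, e2]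
    push_cast
    rw [h2]
    ring
  have i1 : IntegrableOn
      (fun x : ℝ => ((n:ℝ)+1) * ((x - μ) ^ (n+1) * x ^ (m+1) * Real.exp (-(b * x))))
      (Set.Ioi 0) := (int_poly hb μ (n+1) (m+1)).const_mul _
  have i2 : IntegrableOn
      (fun x : ℝ => ((n:ℝ)+1) * μ * ((x - μ) ^ n * x ^ (m+1) * Real.exp (-(b * x))))
      (Set.Ioi 0) := (int_poly hb μ n (m+1)).const_mul _
  have i3 : IntegrableOn
      (fun x : ℝ => b * ((x - μ) ^ (n+2) * x ^ (m+1) * Real.exp (-(b * x))))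
      (Set.Ioi 0) := (int_poly hb μ (n+2) (m+1)).const_mul _
  have hintD : IntegrableOn D (Set.Ioi 0) := (i1.add i2).sub i3
  have hibp := integral_Ioi_of_hasDerivAt_of_tendsto
    (f := H) (a := 0) (m := 0)
    (Continuous.continuousWithinAt (by fun_prop))
    (fun x _ => hderiv x) hintD ?_
  · have hH0 : H 0 = 0 := by simp [hH]
    rw [hH0, sub_zero] at hibp
    simp only [hD] at hibp
    have i12 : IntegrableOn (fun x : ℝ =>
        ((n:ℝ)+1) * ((x - μ) ^ (n+1) * x ^ (m+1) * Real.exp (-(b * x)))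
        + ((n:ℝ)+1) * μ * ((x - μ) ^ n * x ^ (m+1) * Real.exp (-(b * x))))
        (Set.Ioi 0) := i1.add i2
    rw [MeasureTheory.integral_sub i12 i3,
      MeasureTheory.integral_add i1 i2,
      MeasureTheory.integral_const_mul, MeasureTheory.integral_const_mul,
      MeasureTheory.integral_const_mul] at hibp
    linarith [hibp]
  · have := tendsto_poly hb μ (n+1) (m+2)
    exact this

end ErlangAux

namespace ErlangAux

/-- Central-moment integral against the gamma measure as an explicit integral. -/
lemma gamma_int (hb : 0 < b) (m k : ℕ) :
    ∫ x, (x - ((m:ℝ)+2)/b) ^ k ∂(gammaMeasure ((m+2 : ℕ) : ℝ) b)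
      = (b ^ (m+2) / (m+1).factorial) *
          ∫ x in Set.Ioi (0:ℝ),
            (x - ((m:ℝ)+2)/b) ^ k * x ^ (m+1) * Real.exp (-(b * x)) := by
  set μ : ℝ := ((m:ℝ)+2)/b with hμ
  have hpdf : gammaPDF ((m+2 : ℕ) : ℝ) b
      = fun x => ((Real.toNNReal (gammaPDFReal ((m+2 : ℕ) : ℝ) b x) : ℝ≥0) : ℝ≥0∞) :=
    funext fun x => rfl
  rw [gammaMeasure, hpdf,
    integral_withDensity_eq_integral_smul
      ((measurable_gammaPDFReal _ b).real_toNNReal) (fun x => (x - μ) ^ k)]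
  have hnn : ∀ x : ℝ, 0 ≤ gammaPDFReal ((m+2 : ℕ) : ℝ) b x :=
    gammaPDFReal_nonneg (by positivity) hb
  have key : (fun x : ℝ => (Real.toNNReal (gammaPDFReal ((m+2 : ℕ) : ℝ) b x) : ℝ≥0)
        • (x - μ) ^ k)
      = Set.indicator (Set.Ioi (0:ℝ))
          (fun x => (b ^ (m+2) / (m+1).factorial) *
            ((x - μ) ^ k * x ^ (m+1) * Real.exp (-(b * x)))) := by
    funext x
    rw [NNReal.smul_def, Real.coe_toNNReal _ (hnn x), smul_eq_mul]
    by_cases hx : 0 < x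
    · rw [Set.indicator_of_mem (show x ∈ Set.Ioi 0 from hx)]
      unfold gammaPDFReal
      rw [if_pos hx.le]
      have hcast : ((m+2 : ℕ) : ℝ) - 1 = ((m+1 : ℕ) : ℝ) := by push_cast; ring
      have hGamma : Real.Gamma ((m+2 : ℕ) : ℝ) = (m+1).factorial := by
        have : ((m+2 : ℕ) : ℝ) = ((m+1 : ℕ) : ℝ) + 1 := by push_cast; ring
        rw [this, Real.Gamma_nat_eq_factorial]
      rw [hcast, Real.rpow_natCast, Real.rpow_natCast, hGamma]
      ring
    · rw [Set.indicator_of_notMem (show x ∉ Set.Ioi 0 from hx)]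
      rcases eq_or_lt_of_le (not_lt.1 hx) with h0 | hneg
      · subst h0
        unfold gammaPDFReal
        rw [if_pos le_rfl]
        have e3 : ((m+2 : ℕ) : ℝ) - 1 = (m:ℝ) + 1 := by push_cast; ring
        rw [e3, Real.zero_rpow (by positivity : (m:ℝ) + 1 ≠ 0)]
        ring
      · unfold gammaPDFReal
        rw [if_neg (not_le.2 hneg)]
        ring
  rw [key, MeasureTheory.integral_indicator measurableSet_Ioi,
    MeasureTheory.integral_const_mul]

end ErlangAux

open MeasureTheory ProbabilityTheory Real

/-- central moment bound for an Erlang(a, b) random variable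
(Lemma A.1 of the paper). -/
theorem erlang_central_moment_bound
    {Ω : Type*} [MeasurableSpace Ω] (P : Measure Ω) [IsProbabilityMeasure P]
    (a : ℕ) (ha : 2 ≤ a) (b : ℝ) (hb : 0 < b)
    (Y : Ω → ℝ) (hY : Measure.map Y P = gammaMeasure a b) :
    ∀ k : ℕ, 1 ≤ k →
      ∫ ω, (Y ω - a / b) ^ k ∂P
        ≤ (k.factorial * Real.sqrt a / b ^ k)
            * ((Real.sqrt a ^ (k + 1) - 1) / (Real.sqrt a - 1)) := by
  obtain ⟨m, rfl⟩ : ∃ m, a = m + 2 := ⟨a - 2, by omega⟩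
  intro k _
  have hA : ((m+2 : ℕ) : ℝ) = (m:ℝ) + 2 := by push_cast; ring
  haveI hprob : IsProbabilityMeasure (gammaMeasure ((m+2 : ℕ) : ℝ) b) :=
    isProbabilityMeasure_gammaMeasure (by rw [hA]; positivity) hb
  -- Y is a.e.-measurable
  have hmeas : AEMeasurable Y P := by
    by_contra h
    have h0 : Measure.map Y P = 0 := Measure.map_of_not_aemeasurable h
    rw [h0] at hY
    have h1 := hprob.measure_univ
    rw [← hY] at h1
    simp at h1
  -- notation
  set F : ℝ := Real.sqrt ((m+2 : ℕ) : ℝ) with hF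
  have hF0 : 0 ≤ F := Real.sqrt_nonneg _
  have hF2 : F ^ 2 = (m:ℝ) + 2 := by
    rw [hF, Real.sq_sqrt (by rw [hA]; positivity)]; exact hA
  have hF1 : 1 < F := by
    rw [hF, show (1:ℝ) = Real.sqrt 1 from Real.sqrt_one.symm]
    exact Real.sqrt_lt_sqrt (by norm_num) (by rw [hA]; have := Nat.cast_nonneg (α := ℝ) m; linarith)
  set S : ℕ → ℝ := fun n => ∑ j ∈ Finset.range (n+1), F ^ j with hS
  have hSnn : ∀ n, 0 ≤ S n := fun n =>
    Finset.sum_nonneg fun j _ => pow_nonneg hF0 j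
  set B : ℕ → ℝ := fun n => ((n.factorial : ℝ) * F / b ^ n) * S n with hB
  set C : ℕ → ℝ :=
    fun j => ∫ x, (x - ((m:ℝ)+2)/b) ^ j ∂(gammaMeasure ((m+2 : ℕ) : ℝ) b) with hC
  set c : ℝ := b ^ (m+2) / (m+1).factorial with hc
  have hCI : ∀ j, C j = c * ∫ x in Set.Ioi (0:ℝ),
      (x - ((m:ℝ)+2)/b) ^ j * x ^ (m+1) * Real.exp (-(b * x)) :=
    fun j => ErlangAux.gamma_int hb m j
  have hC0 : C 0 = 1 := by
    simp only [hC, pow_zero]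
    rw [MeasureTheory.integral_const, probReal_univ]
    simp
  have hC1 : C 1 = 0 := by
    rw [hCI 1, ErlangAux.I_one hb m, mul_zero]
  have hrec : ∀ n, b * C (n+2)
      = ((n:ℝ)+1) * C (n+1) + ((n:ℝ)+1) * (((m:ℝ)+2)/b) * C n := by
    intro n
    rw [hCI (n+2), hCI (n+1), hCI n]
    linear_combination c * ErlangAux.I_rec hb m n
  -- the inductive bound
  have hCB : ∀ n, C n ≤ B n ∧ C (n+1) ≤ B (n+1) := by
    intro n
    induction n with
    | zero =>
      constructor
      · rw [hC0]
        have hS0 : S 0 = 1 := by simp [hS]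
        simp only [hB, hS0, Nat.factorial_zero, Nat.cast_one, pow_zero, one_mul, div_one,
          mul_one]
        linarith
      · rw [hC1]
        simp only [hB]
        have := hSnn 1
        have hb1 : (0:ℝ) < b ^ 1 := by positivity
        positivity
    | succ n ih =>
      refine ⟨ih.2, ?_⟩
      -- key combinatorial inequality
      have h1 : S (n+1) ≤ S (n+2) :=
        Finset.sum_le_sum_of_subset_of_nonneg
          (Finset.range_subset_range.2 (by omega)) (fun j _ _ => pow_nonneg hF0 j)
      have h2 : F ^ 2 * S n ≤ S (n+2) := by
        have e1 : F ^ 2 * S n = ∑ j ∈ Finset.range (n+1), F ^ (j+2) := by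
          simp only [hS]
          rw [Finset.mul_sum]
          exact Finset.sum_congr rfl fun j _ => by ring
        have e2 : ∑ j ∈ Finset.range (n+1), F ^ (j+2)
            = ∑ j ∈ Finset.Ico 2 (n+3), F ^ j := by
          rw [Finset.sum_Ico_eq_sum_range]
          exact Finset.sum_congr rfl fun j _ => by rw [add_comm]
        rw [e1, e2]
        simp only [hS]
        exact Finset.sum_le_sum_of_subset_of_nonneg
          (fun j hj => Finset.mem_range.2 (Finset.mem_Ico.1 hj).2)
          (fun j _ _ => pow_nonneg hF0 j)
      have hSkey : ((n:ℝ)+1) * ((n+1).factorial : ℝ) * S (n+1)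
          + ((n+1).factorial : ℝ) * (F ^ 2 * S n)
          ≤ ((n+2).factorial : ℝ) * S (n+2) := by
        calc ((n:ℝ)+1) * ((n+1).factorial : ℝ) * S (n+1)
            + ((n+1).factorial : ℝ) * (F ^ 2 * S n)
            ≤ ((n:ℝ)+1) * ((n+1).factorial : ℝ) * S (n+2)
              + ((n+1).factorial : ℝ) * S (n+2) :=
              add_le_add
                (mul_le_mul_of_nonneg_left h1 (by positivity))
                (mul_le_mul_of_nonneg_left h2 (by positivity))
          _ = ((n+2).factorial : ℝ) * S (n+2) := by
              rw [show n + 2 = (n+1) + 1 from rfl, Nat.factorial_succ (n+1)]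
              push_cast
              ring
      have e1 : ((n:ℝ)+1) * B (n+1) + ((n:ℝ)+1) * (((m:ℝ)+2)/b) * B n
          = F / b ^ (n+2) * (b * (((n:ℝ)+1) * ((n+1).factorial : ℝ) * S (n+1)
              + ((n+1).factorial : ℝ) * (F ^ 2 * S n))) := by
        simp only [hB]
        rw [← hF2, Nat.factorial_succ n]
        push_cast
        field_simp
        ring
      have e2 : b * B (n+2)
          = F / b ^ (n+2) * (b * (((n+2).factorial : ℝ) * S (n+2))) := by
        simp only [hB]
        field_simp
      have key : ((n:ℝ)+1) * B (n+1) + ((n:ℝ)+1) * (((m:ℝ)+2)/b) * B n ≤ b * B (n+2) := by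
        rw [e1, e2]
        apply mul_le_mul_of_nonneg_left _ (by positivity)
        exact mul_le_mul_of_nonneg_left hSkey hb.le
      have hstep : b * C (n+2) ≤ b * B (n+2) := by
        rw [hrec n]
        refine le_trans (add_le_add
          (mul_le_mul_of_nonneg_left ih.2 (by positivity))
          (mul_le_mul_of_nonneg_left ih.1 (by positivity))) key
      exact le_of_mul_le_mul_left hstep hb
  -- identify the LHS with C k
  have hmap : ∫ ω, (Y ω - ((m+2 : ℕ) : ℝ) / b) ^ k ∂P = C k := by
    simp only [hC, ← hA]
    rw [← hY]
    have hcont : Continuous fun x : ℝ => (x - ((m+2 : ℕ) : ℝ)/b) ^ k := by fun_prop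
    exact (integral_map hmeas hcont.aestronglyMeasurable).symm
  calc ∫ ω, (Y ω - ((m+2 : ℕ) : ℝ) / b) ^ k ∂P = C k := hmap
    _ ≤ B k := (hCB k).1
    _ = (↑k.factorial * Real.sqrt ((m+2 : ℕ) : ℝ) / b ^ k)
        * ((Real.sqrt ((m+2 : ℕ) : ℝ) ^ (k + 1) - 1) / (Real.sqrt ((m+2 : ℕ) : ℝ) - 1)) := by
      simp only [hB, hS, ← hF]
      rw [geom_sum_eq (ne_of_gt hF1) (k+1)]
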